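/- Let G=(U,V,E) be a bipartite graph with a fixed linear ordering π_U of U, and let S ⊆ V and W ⊆ S. Then OPT(S) ≤ OPT(W) + OPT(S∖W) + γ(π_U, W, S∖W), where γ(π_U, W, S∖W) is the number of pairs of edges ((u₁,v₁),(u₂,v₂)) ∈ E(W) × E(S∖W) with π_U(u₂) < π_U(u₁). -/

import Mathlib

open Finset

/-- Two edges `e₁ = (u₁, v₁)` and `e₂ = (u₂, v₂)` of a bipartite graph
`G = (U, V, E ⊆ U × V)` cross in the 2-level drawing `(πU, πV)`:
`u₁ ≠ u₂`, `v₁ ≠ v₂`, and either `πU u₁ < πU u₂` and `πV v₂ < πV v₁`, or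
`πU u₂ < πU u₁` and `πV v₁ < πV v₂`. -/
def Cross {U V : Type*} [Fintype U] [Fintype V]
    (πU : U ≃ Fin (Fintype.card U)) (πV : V ≃ Fin (Fintype.card V))
    (e₁ e₂ : U × V) : Prop :=
  e₁.1 ≠ e₂.1 ∧ e₁.2 ≠ e₂.2 ∧
    ((πU e₁.1 < πU e₂.1 ∧ πV e₂.2 < πV e₁.2) ∨
     (πU e₂.1 < πU e₁.1 ∧ πV e₁.2 < πV e₂.2))

/-- `E(W)`: the set of edges of `E` whose endpoint in the free layer lies in `W`. -/
noncomputable def edgesIn {U V : Type*} (E : Finset (U × V)) (W : Finset V) :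
    Finset (U × V) := by
  classical exact E.filter fun e => e.2 ∈ W

/-- `cr_S(πU, πV)`: the number of distinct unordered pairs of edges of `S` that
cross in `(πU, πV)`.  Since two crossing edges have distinct `U`-endpoints, each
unordered crossing pair is counted exactly once by counting the ordered pairs
`(e₁, e₂)` that cross and satisfy `πU e₁.1 < πU e₂.1`. -/
noncomputable def cr {U V : Type*} [Fintype U] [Fintype V]
    (πU : U ≃ Fin (Fintype.card U)) (πV : V ≃ Fin (Fintype.card V))
    (S : Finset (U × V)) : ℕ := by
  classical exact
    ((S ×ˢ S).filter fun p => Cross πU πV p.1 p.2 ∧ πU p.1.1 < πU p.2.1).card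

/-- `V₁ ≺_{πV} V₂`: every vertex of `V₁` precedes every vertex of `V₂` in `πV`. -/
def Precedes {V : Type*} [Fintype V] (πV : V ≃ Fin (Fintype.card V))
    (V₁ V₂ : Finset V) : Prop :=
  ∀ v₁ ∈ V₁, ∀ v₂ ∈ V₂, πV v₁ < πV v₂

/-- `γ(πU, V₁, V₂)`: the number of pairs of edges
`((u₁, v₁), (u₂, v₂)) ∈ E(V₁) × E(V₂)` with `πU u₂ < πU u₁`; by the
separability lemma this is the number of crossings between an edge of `E(V₁)`
and an edge of `E(V₂)` in any 2-level drawing `(πU, πV)` with `V₁ ≺_{πV} V₂`. -/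
noncomputable def gammaCr {U V : Type*} [Fintype U] (E : Finset (U × V))
    (πU : U ≃ Fin (Fintype.card U)) (V₁ V₂ : Finset V) : ℕ := by
  classical exact
    ((edgesIn E V₁ ×ˢ edgesIn E V₂).filter fun p => πU p.2.1 < πU p.1.1).card

/-- `OPT(S)`: the minimum over all linear orderings `πV` of `V` of
`cr_{E(S)}(πU, πV)`. -/
noncomputable def OPT {U V : Type*} [Fintype U] [Fintype V] (E : Finset (U × V))
    (πU : U ≃ Fin (Fintype.card U)) (S : Finset V) : ℕ :=
  sInf {c | ∃ πV : V ≃ Fin (Fintype.card V), c = cr πU πV (edgesIn E S)}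

open scoped Classical

lemma cr_congr {U V : Type*} [Fintype U] [Fintype V] (πU : U ≃ Fin (Fintype.card U)) (πV πV' : V ≃ Fin (Fintype.card V))
    (A : Finset (U × V))
    (h : ∀ e ∈ A, ∀ g ∈ A, (πV e.2 < πV g.2 ↔ πV' e.2 < πV' g.2)) :
    cr πU πV A = cr πU πV' A := by
  unfold cr
  congr 1
  apply Finset.filter_congr
  rintro ⟨e, g⟩ hp
  simp only [Finset.mem_product] at hp
  simp only [Cross]
  rw [h e hp.1 g hp.2, h g hp.2 e hp.1]

/-- There exists an ordering of `V` extending `πV₁` on `W`, `πV₂` on `D`,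
with `W` before `D`, provided `W` and `D` are disjoint. -/
lemma exists_merge {V : Type*} [Fintype V] (πV₁ πV₂ : V ≃ Fin (Fintype.card V)) (W D : Finset V)
    (hWD : Disjoint W D) :
    ∃ πV : V ≃ Fin (Fintype.card V),
      (∀ a ∈ W, ∀ b ∈ W, (πV a < πV b ↔ πV₁ a < πV₁ b)) ∧
      (∀ a ∈ D, ∀ b ∈ D, (πV a < πV b ↔ πV₂ a < πV₂ b)) ∧
      (∀ a ∈ W, ∀ b ∈ D, πV a < πV b) := by
  classical
  set f : V → Lex (Fin 3 × Fin (Fintype.card V)) := fun v =>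
    toLex (if v ∈ W then 0 else if v ∈ D then 1 else 2,
           if v ∈ D then πV₂ v else πV₁ v) with hf
  have hWnD : ∀ v ∈ W, v ∉ D := fun v hv => (Finset.disjoint_left.mp hWD hv)
  have key : ∀ a b : V, f a < f b ↔
      ((if a ∈ W then (0:Fin 3) else if a ∈ D then 1 else 2) <
       (if b ∈ W then (0:Fin 3) else if b ∈ D then 1 else 2)) ∨
      ((if a ∈ W then (0:Fin 3) else if a ∈ D then 1 else 2) =
       (if b ∈ W then (0:Fin 3) else if b ∈ D then 1 else 2) ∧
       (if a ∈ D then πV₂ a else πV₁ a) < (if b ∈ D then πV₂ b else πV₁ b)) := by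
    intro a b
    exact Prod.Lex.lt_iff
  have hinj : Function.Injective f := by
    intro a b hab
    have h1 : (if a ∈ W then (0:Fin 3) else if a ∈ D then 1 else 2) =
        (if b ∈ W then (0:Fin 3) else if b ∈ D then 1 else 2) ∧
        (if a ∈ D then πV₂ a else πV₁ a) = (if b ∈ D then πV₂ b else πV₁ b) := by
      have := congrArg ofLex hab
      exact ⟨congrArg Prod.fst this, congrArg Prod.snd this⟩
    by_cases haD : a ∈ D <;> by_cases hbD : b ∈ D
    · exact πV₂.injective (by simpa [haD, hbD] using h1.2)
    · exfalso
      have haW : a ∉ W := fun h => hWnD a h haD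
      by_cases hbW : b ∈ W <;> simp [haD, hbD, haW, hbW] at h1 <;>
        exact absurd h1.1 (by decide)
    · exfalso
      have hbW : b ∉ W := fun h => hWnD b h hbD
      by_cases haW : a ∈ W <;> simp [haD, hbD, haW, hbW] at h1 <;>
        exact absurd h1.1 (by decide)
    · exact πV₁.injective (by simpa [haD, hbD] using h1.2)
  letI : LinearOrder V := LinearOrder.lift' f hinj
  have hlt : ∀ a b : V, a < b ↔ f a < f b := fun a b => Iff.rfl
  let e : V ≃o Fin (Fintype.card V) := (monoEquivOfFin V rfl).symm
  refine ⟨e.toEquiv, ?_, ?_, ?_⟩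
  · intro a ha b hb
    rw [show (e.toEquiv a < e.toEquiv b) ↔ a < b from e.lt_iff_lt, hlt, key]
    simp [ha, hb, hWnD a ha, hWnD b hb]
  · intro a ha b hb
    rw [show (e.toEquiv a < e.toEquiv b) ↔ a < b from e.lt_iff_lt, hlt, key]
    have haW : a ∉ W := fun h => hWnD a h ha
    have hbW : b ∉ W := fun h => hWnD b h hb
    simp [ha, hb, haW, hbW]
  · intro a ha b hb
    rw [show (e.toEquiv a < e.toEquiv b) ↔ a < b from e.lt_iff_lt, hlt, key]
    have hbW : b ∉ W := fun h => hWnD b h hb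
    left
    simp only [ha, hbW, hb, if_true, if_false]
    decide

lemma mem_edgesIn {U V : Type*} {E : Finset (U × V)} {W : Finset V} {e : U × V} :
    e ∈ edgesIn E W ↔ e ∈ E ∧ e.2 ∈ W := by
  classical
  simp [edgesIn]

theorem OPT_le_split' {U V : Type*} [Fintype U] [Fintype V] (E : Finset (U × V)) (πU : U ≃ Fin (Fintype.card U))
    (S W : Finset V) (hWS : W ⊆ S) :
    OPT E πU S ≤ OPT E πU W + OPT E πU (S \ W) + gammaCr E πU W (S \ W) := by
  classical
  set D := S \ W with hDdef
  have hWD : Disjoint W D := Finset.disjoint_sdiff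
  -- optimal orderings for W and D
  have hne : ∀ T : Finset V,
      {c | ∃ πV : V ≃ Fin (Fintype.card V), c = cr πU πV (edgesIn E T)}.Nonempty :=
    fun T => ⟨_, Fintype.equivFin V, rfl⟩
  obtain ⟨π₁, hπ₁⟩ := Nat.sInf_mem (hne W)
  obtain ⟨π₂, hπ₂⟩ := Nat.sInf_mem (hne D)
  obtain ⟨πV, hmW, hmD, hord⟩ := exists_merge π₁ π₂ W D hWD
  set A := edgesIn E W with hA
  set B := edgesIn E D with hB
  have hA2 : ∀ e ∈ A, e.2 ∈ W := fun e he => (mem_edgesIn.mp he).2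
  have hB2 : ∀ e ∈ B, e.2 ∈ D := fun e he => (mem_edgesIn.mp he).2
  have hABdisj : Disjoint A B := by
    rw [Finset.disjoint_left]
    intro e heA heB
    exact Finset.disjoint_left.mp hWD (hA2 e heA) (hB2 e heB)
  have hES : edgesIn E S = A ∪ B := by
    ext e
    simp only [mem_edgesIn, Finset.mem_union, hA, hB, hDdef, Finset.mem_sdiff]
    by_cases hW : e.2 ∈ W
    · simp [hW, fun h : e.2 ∈ W => hWS h, hWS hW]
    · simp [hW]
  -- the crossing predicate
  set P : (U × V) × (U × V) → Prop :=
    fun p => Cross πU πV p.1 p.2 ∧ πU p.1.1 < πU p.2.1 with hP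
  have hcr : cr πU πV (edgesIn E S) =
      ((A ×ˢ A).filter P).card + ((A ×ˢ B).filter P).card
      + ((B ×ˢ A).filter P).card + ((B ×ˢ B).filter P).card := by
    unfold cr
    rw [hES]
    have hsplit : (A ∪ B) ×ˢ (A ∪ B) = ((A ×ˢ A ∪ A ×ˢ B) ∪ B ×ˢ A) ∪ B ×ˢ B := by
      rw [Finset.union_product, Finset.product_union, Finset.product_union]
      ac_rfl
    have hd : ∀ {X₁ Y₁ X₂ Y₂ : Finset (U × V)},
        (Disjoint X₁ X₂ ∨ Disjoint Y₁ Y₂) → Disjoint (X₁ ×ˢ Y₁) (X₂ ×ˢ Y₂) := by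
      intro X₁ Y₁ X₂ Y₂ h
      rw [Finset.disjoint_left]
      rintro p hp hp'
      rw [Finset.mem_product] at hp hp'
      rcases h with h | h
      · exact Finset.disjoint_left.mp h hp.1 hp'.1
      · exact Finset.disjoint_left.mp h hp.2 hp'.2
    have hd1 : Disjoint ((A ×ˢ A).filter P) ((A ×ˢ B).filter P) :=
      Finset.disjoint_filter_filter (hd (Or.inr hABdisj))
    have hd2 : Disjoint ((A ×ˢ A).filter P ∪ (A ×ˢ B).filter P) ((B ×ˢ A).filter P) :=
      Finset.disjoint_union_left.mpr
        ⟨Finset.disjoint_filter_filter (hd (Or.inl hABdisj)),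
         Finset.disjoint_filter_filter (hd (Or.inl hABdisj))⟩
    have hd3 : Disjoint ((A ×ˢ A).filter P ∪ (A ×ˢ B).filter P ∪ (B ×ˢ A).filter P)
        ((B ×ˢ B).filter P) :=
      Finset.disjoint_union_left.mpr
        ⟨Finset.disjoint_union_left.mpr
          ⟨Finset.disjoint_filter_filter (hd (Or.inl hABdisj)),
           Finset.disjoint_filter_filter (hd (Or.inl hABdisj))⟩,
         Finset.disjoint_filter_filter (hd (Or.inr hABdisj))⟩
    rw [hsplit, Finset.filter_union, Finset.filter_union, Finset.filter_union,
      Finset.card_union_of_disjoint hd3, Finset.card_union_of_disjoint hd2,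
      Finset.card_union_of_disjoint hd1]
  -- term 1 : equals OPT W
  have hAA : ((A ×ˢ A).filter P).card = OPT E πU W := by
    have : ((A ×ˢ A).filter P).card = cr πU πV A := rfl
    rw [this, cr_congr πU πV π₁ A (fun e he g hg => hmW _ (hA2 e he) _ (hA2 g hg)), ← hπ₁]
    rfl
  have hBB : ((B ×ˢ B).filter P).card = OPT E πU D := by
    have : ((B ×ˢ B).filter P).card = cr πU πV B := rfl
    rw [this, cr_congr πU πV π₂ B (fun e he g hg => hmD _ (hB2 e he) _ (hB2 g hg)), ← hπ₂]
    rfl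
  -- term AB : zero
  have hAB : ((A ×ˢ B).filter P).card = 0 := by
    rw [Finset.card_eq_zero, Finset.filter_eq_empty_iff]
    rintro ⟨e, g⟩ hp
    rw [Finset.mem_product] at hp
    have hv : πV e.2 < πV g.2 := hord _ (hA2 _ hp.1) _ (hB2 _ hp.2)
    rintro ⟨⟨-, -, hc⟩, hu⟩
    rcases hc with ⟨-, h2⟩ | ⟨h1, -⟩
    · exact absurd hv (lt_asymm h2)
    · exact absurd hu (lt_asymm h1)
  -- term BA : equals gammaCr
  have hBA : ((B ×ˢ A).filter P).card = gammaCr E πU W D := by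
    unfold gammaCr
    rw [← hA, ← hB]
    apply Finset.card_bij (fun p _ => Prod.swap p)
    · rintro ⟨e, g⟩ hp
      rw [Finset.mem_filter, Finset.mem_product] at hp ⊢
      exact ⟨⟨hp.1.2, hp.1.1⟩, hp.2.2⟩
    · exact fun p _ q _ h => Prod.swap_injective h
    · rintro ⟨e, g⟩ hp
      rw [Finset.mem_filter, Finset.mem_product] at hp
      obtain ⟨⟨heA, hgB⟩, hu⟩ := hp
      have hv : πV e.2 < πV g.2 := hord _ (hA2 _ heA) _ (hB2 _ hgB)
      refine ⟨(g, e), ?_, rfl⟩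
      rw [Finset.mem_filter, Finset.mem_product]
      refine ⟨⟨hgB, heA⟩, ⟨?_, ?_, Or.inl ⟨hu, hv⟩⟩, hu⟩
      · intro h; rw [h] at hu; exact lt_irrefl _ hu
      · intro h; rw [h] at hv; exact lt_irrefl _ hv
  calc OPT E πU S ≤ cr πU πV (edgesIn E S) := Nat.sInf_le ⟨πV, rfl⟩
    _ = OPT E πU W + 0 + gammaCr E πU W D + OPT E πU D := by
        rw [hcr, hAA, hBB, hAB, hBA]
    _ = OPT E πU W + OPT E πU D + gammaCr E πU W D := by ring

open scoped Classical in
/-- for `W ⊆ S ⊆ V`,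
`OPT(S) ≤ OPT(W) + OPT(S \ W) + γ(πU, W, S \ W)`. -/
theorem OPT_le_split {U V : Type*} [Fintype U] [Fintype V]
    (E : Finset (U × V)) (πU : U ≃ Fin (Fintype.card U))
    (S W : Finset V) (hWS : W ⊆ S) :
    OPT E πU S ≤ OPT E πU W + OPT E πU (S \ W) + gammaCr E πU W (S \ W) :=
  OPT_le_split' E πU S W hWS
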